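/- The families φ₁₀(x)=2, φ₁ᵢ(x)=4(1−x)sin(2πi x), φ₂ᵢ(x)=4cos(2πi x) and ψ₁₀(x)=x, ψ₁ᵢ(x)=sin(2πi x), ψ₂ᵢ(x)=x cos(2πi x) form a bi-orthogonal system on L²(0,1): ⟨φ₁₀,ψ₁₀⟩=1, ⟨φ₁ᵢ,ψ₁ⱼ⟩=δᵢⱼ, ⟨φ₂ᵢ,ψ₂ⱼ⟩=δᵢⱼ, and all cross inner products ⟨φ₁₀,ψₖᵢ⟩, ⟨φₖᵢ,ψ₁₀⟩, ⟨φ₁ᵢ,ψ₂ⱼ⟩, ⟨φ₂ᵢ,ψ₁ⱼ⟩ vanish for i,j ≥ 1. -/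

import Mathlib

set_option maxHeartbeats 800000


open Real intervalIntegral

/-- The L²(0,1) inner product. -/
noncomputable def ip (f g : ℝ → ℝ) : ℝ := ∫ x in (0:ℝ)..1, f x * g x

noncomputable def φ₁₀ : ℝ → ℝ := fun _ => 2
noncomputable def φ₁ (i : ℕ) : ℝ → ℝ := fun x => 4 * (1 - x) * Real.sin (2 * π * i * x)
noncomputable def φ₂ (i : ℕ) : ℝ → ℝ := fun x => 4 * Real.cos (2 * π * i * x)
noncomputable def ψ₁₀ : ℝ → ℝ := fun x => x
noncomputable def ψ₁ (i : ℕ) : ℝ → ℝ := fun x => Real.sin (2 * π * i * x)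
noncomputable def ψ₂ (i : ℕ) : ℝ → ℝ := fun x => x * Real.cos (2 * π * i * x)

lemma I_poly_cos (k a b : ℝ) (hk : k ≠ 0) (hs : Real.sin k = 0) (hc : Real.cos k = 1) :
    ∫ x in (0:ℝ)..1, (a + b * x) * Real.cos (k * x) = 0 := by
  have h : ∀ x ∈ Set.uIcc (0:ℝ) 1, HasDerivAt
      (fun x : ℝ => (a + b * x) * Real.sin (k * x) / k + b * Real.cos (k * x) / k ^ 2)
      ((a + b * x) * Real.cos (k * x)) x := by
    intro x _
    have h1 : HasDerivAt (fun x : ℝ => Real.sin (k * x)) (Real.cos (k * x) * k) x :=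
      by simpa [Function.comp_def] using (Real.hasDerivAt_sin (k * x)).comp x ((hasDerivAt_id x).const_mul k)
    have h2 : HasDerivAt (fun x : ℝ => Real.cos (k * x)) (-Real.sin (k * x) * k) x :=
      by simpa [Function.comp_def] using (Real.hasDerivAt_cos (k * x)).comp x ((hasDerivAt_id x).const_mul k)
    have h3 : HasDerivAt (fun x : ℝ => a + b * x) b x := by
      simpa using ((hasDerivAt_id x).const_mul b).const_add a
    have := (((h3.mul h1).div_const k).add ((h2.const_mul b).div_const (k^2)))
    refine this.congr_deriv ?_
    field_simp
    ring
  rw [integral_eq_sub_of_hasDerivAt h (by apply Continuous.intervalIntegrable; fun_prop)]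
  simp [hs, hc]

lemma I_poly_sin (k a b c : ℝ) (hk : k ≠ 0) (hs : Real.sin k = 0) (hc : Real.cos k = 1) :
    ∫ x in (0:ℝ)..1, (a + b * x + c * x ^ 2) * Real.sin (k * x) = -(b + c) / k := by
  have h : ∀ x ∈ Set.uIcc (0:ℝ) 1, HasDerivAt
      (fun x : ℝ => -((a + b * x + c * x ^ 2) * Real.cos (k * x)) / k
        + (b + 2 * c * x) * Real.sin (k * x) / k ^ 2 + 2 * c * Real.cos (k * x) / k ^ 3)
      ((a + b * x + c * x ^ 2) * Real.sin (k * x)) x := by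
    intro x _
    have h1 : HasDerivAt (fun x : ℝ => Real.sin (k * x)) (Real.cos (k * x) * k) x :=
      by simpa [Function.comp_def] using (Real.hasDerivAt_sin (k * x)).comp x ((hasDerivAt_id x).const_mul k)
    have h2 : HasDerivAt (fun x : ℝ => Real.cos (k * x)) (-Real.sin (k * x) * k) x :=
      by simpa [Function.comp_def] using (Real.hasDerivAt_cos (k * x)).comp x ((hasDerivAt_id x).const_mul k)
    have h3 : HasDerivAt (fun x : ℝ => a + b * x + c * x ^ 2) (b + c * (2 * x)) x := by
      have := (((hasDerivAt_id x).const_mul b).const_add a).add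
        ((hasDerivAt_pow 2 x).const_mul c)
      simpa [Pi.add_def] using this
    have h4 : HasDerivAt (fun x : ℝ => b + 2 * c * x) (2 * c) x := by
      simpa using ((hasDerivAt_id x).const_mul (2 * c)).const_add b
    have := ((((h3.mul h2).neg).div_const k).add ((h4.mul h1).div_const (k^2))).add
      ((h2.const_mul (2 * c)).div_const (k^3))
    refine this.congr_deriv ?_
    field_simp
    ring
  rw [integral_eq_sub_of_hasDerivAt h (by apply Continuous.intervalIntegrable; fun_prop)]
  norm_num [hs, hc]
  field_simp
  ring

lemma I_poly (a b : ℝ) : ∫ x in (0:ℝ)..1, (a + b * x) = a + b / 2 := by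
  have h1 : IntervalIntegrable (fun x : ℝ => b * x) MeasureTheory.volume 0 1 :=
    (by fun_prop : Continuous fun x : ℝ => b * x).intervalIntegrable _ _
  rw [integral_add intervalIntegrable_const h1, integral_const, integral_const_mul, integral_id]
  norm_num
  ring

lemma sin2pi (m : ℤ) : Real.sin (2 * π * m) = 0 := by
  rw [show (2 * π * (m:ℝ)) = ((2*m : ℤ):ℝ) * π by push_cast; ring]
  exact Real.sin_int_mul_pi _

lemma cos2pi (m : ℤ) : Real.cos (2 * π * m) = 1 := by
  rw [show (2 * π * (m:ℝ)) = (m:ℝ) * (2 * π) by ring]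
  exact Real.cos_int_mul_two_pi m

lemma kne (m : ℤ) (hm : m ≠ 0) : (2 * π * (m:ℝ)) ≠ 0 := by
  have : (m:ℝ) ≠ 0 := Int.cast_ne_zero.mpr hm
  positivity

lemma J_cos (m : ℤ) (a b : ℝ) :
    ∫ x in (0:ℝ)..1, (a + b * x) * Real.cos (2 * π * m * x) =
      if m = 0 then a + b / 2 else 0 := by
  by_cases hm : m = 0
  · subst hm
    simp only [Int.cast_zero, mul_zero, zero_mul, Real.cos_zero, mul_one, if_true]
    exact I_poly a b
  · rw [if_neg hm]
    exact I_poly_cos _ a b (kne m hm) (sin2pi m) (cos2pi m)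

lemma J_sin (m : ℤ) (a b c : ℝ) :
    ∫ x in (0:ℝ)..1, (a + b * x + c * x ^ 2) * Real.sin (2 * π * m * x) =
      if m = 0 then 0 else -(b + c) / (2 * π * m) := by
  by_cases hm : m = 0
  · subst hm
    simp
  · rw [if_neg hm]
    exact I_poly_sin _ a b c (kne m hm) (sin2pi m) (cos2pi m)

theorem biorthogonal_system :
    ip φ₁₀ ψ₁₀ = 1 ∧
    (∀ i j : ℕ, 1 ≤ i → 1 ≤ j → ip (φ₁ i) (ψ₁ j) = if i = j then 1 else 0) ∧
    (∀ i j : ℕ, 1 ≤ i → 1 ≤ j → ip (φ₂ i) (ψ₂ j) = if i = j then 1 else 0) ∧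
    (∀ i : ℕ, 1 ≤ i → ip φ₁₀ (ψ₁ i) = 0) ∧
    (∀ i : ℕ, 1 ≤ i → ip φ₁₀ (ψ₂ i) = 0) ∧
    (∀ i : ℕ, 1 ≤ i → ip (φ₁ i) ψ₁₀ = 0) ∧
    (∀ i : ℕ, 1 ≤ i → ip (φ₂ i) ψ₁₀ = 0) ∧
    (∀ i j : ℕ, 1 ≤ i → 1 ≤ j → ip (φ₁ i) (ψ₂ j) = 0) ∧
    (∀ i j : ℕ, 1 ≤ i → 1 ≤ j → ip (φ₂ i) (ψ₁ j) = 0) := by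
  refine ⟨?_, ?_, ?_, ?_, ?_, ?_, ?_, ?_, ?_⟩
  · -- ip φ₁₀ ψ₁₀ = 1
    have := I_poly 0 2
    rw [ip]
    simp only [φ₁₀, ψ₁₀]
    norm_num at this ⊢
    exact this
  · -- φ₁ ψ₁
    intro i j hi hj
    have hs : (i:ℤ) + j ≠ 0 := by omega
    have key : (fun x => φ₁ i x * ψ₁ j x) = fun x =>
        (2 + (-2) * x) * Real.cos (2 * π * (((i:ℤ) - j : ℤ) : ℝ) * x)
        - (2 + (-2) * x) * Real.cos (2 * π * (((i:ℤ) + j : ℤ) : ℝ) * x) := by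
      funext x
      simp only [φ₁, ψ₁]
      push_cast
      rw [show 2 * π * ((i:ℝ) - j) * x = 2 * π * i * x - 2 * π * j * x by ring,
        show 2 * π * ((i:ℝ) + j) * x = 2 * π * i * x + 2 * π * j * x by ring,
        Real.cos_sub, Real.cos_add]
      ring
    rw [ip, key, integral_sub
      ((by fun_prop : Continuous fun x : ℝ => (2 + (-2) * x) * Real.cos (2 * π * (((i:ℤ) - j : ℤ) : ℝ) * x)).intervalIntegrable _ _)
      ((by fun_prop : Continuous fun x : ℝ => (2 + (-2) * x) * Real.cos (2 * π * (((i:ℤ) + j : ℤ) : ℝ) * x)).intervalIntegrable _ _),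
      J_cos, J_cos, if_neg hs]
    by_cases h : i = j
    · rw [if_pos h, if_pos (by omega : (i:ℤ) - j = 0)]
      norm_num
    · rw [if_neg h, if_neg (by omega : ¬ (i:ℤ) - j = 0)]
      norm_num
  · -- φ₂ ψ₂
    intro i j hi hj
    have hs : (i:ℤ) + j ≠ 0 := by omega
    have key : (fun x => φ₂ i x * ψ₂ j x) = fun x =>
        (0 + 2 * x) * Real.cos (2 * π * (((i:ℤ) - j : ℤ) : ℝ) * x)
        + (0 + 2 * x) * Real.cos (2 * π * (((i:ℤ) + j : ℤ) : ℝ) * x) := by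
      funext x
      simp only [φ₂, ψ₂]
      push_cast
      rw [show 2 * π * ((i:ℝ) - j) * x = 2 * π * i * x - 2 * π * j * x by ring,
        show 2 * π * ((i:ℝ) + j) * x = 2 * π * i * x + 2 * π * j * x by ring,
        Real.cos_sub, Real.cos_add]
      ring
    rw [ip, key, integral_add
      ((by fun_prop : Continuous fun x : ℝ => (0 + 2 * x) * Real.cos (2 * π * (((i:ℤ) - j : ℤ) : ℝ) * x)).intervalIntegrable _ _)
      ((by fun_prop : Continuous fun x : ℝ => (0 + 2 * x) * Real.cos (2 * π * (((i:ℤ) + j : ℤ) : ℝ) * x)).intervalIntegrable _ _),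
      J_cos, J_cos, if_neg hs]
    by_cases h : i = j
    · rw [if_pos h, if_pos (by omega : (i:ℤ) - j = 0)]
      norm_num
    · rw [if_neg h, if_neg (by omega : ¬ (i:ℤ) - j = 0)]
      norm_num
  · -- φ₁₀ ψ₁
    intro i hi
    have key : (fun x => φ₁₀ x * ψ₁ i x) = fun x =>
        (2 + 0 * x + 0 * x ^ 2) * Real.sin (2 * π * (((i:ℤ)) : ℝ) * x) := by
      funext x
      simp only [φ₁₀, ψ₁]
      push_cast
      ring
    rw [ip, key, J_sin, if_neg (by omega : ¬ (i:ℤ) = 0)]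
    norm_num
  · -- φ₁₀ ψ₂
    intro i hi
    have key : (fun x => φ₁₀ x * ψ₂ i x) = fun x =>
        (0 + 2 * x) * Real.cos (2 * π * (((i:ℤ)) : ℝ) * x) := by
      funext x
      simp only [φ₁₀, ψ₂]
      push_cast
      ring
    rw [ip, key, J_cos, if_neg (by omega : ¬ (i:ℤ) = 0)]
  · -- φ₁ ψ₁₀
    intro i hi
    have key : (fun x => φ₁ i x * ψ₁₀ x) = fun x =>
        (0 + 4 * x + (-4) * x ^ 2) * Real.sin (2 * π * (((i:ℤ)) : ℝ) * x) := by
      funext x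
      simp only [φ₁, ψ₁₀]
      push_cast
      ring
    rw [ip, key, J_sin, if_neg (by omega : ¬ (i:ℤ) = 0)]
    norm_num
  · -- φ₂ ψ₁₀
    intro i hi
    have key : (fun x => φ₂ i x * ψ₁₀ x) = fun x =>
        (0 + 4 * x) * Real.cos (2 * π * (((i:ℤ)) : ℝ) * x) := by
      funext x
      simp only [φ₂, ψ₁₀]
      push_cast
      ring
    rw [ip, key, J_cos, if_neg (by omega : ¬ (i:ℤ) = 0)]
  · -- φ₁ ψ₂
    intro i j hi hj
    have hs : (i:ℤ) + j ≠ 0 := by omega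
    have key : (fun x => φ₁ i x * ψ₂ j x) = fun x =>
        (0 + 2 * x + (-2) * x ^ 2) * Real.sin (2 * π * (((i:ℤ) + j : ℤ) : ℝ) * x)
        + (0 + 2 * x + (-2) * x ^ 2) * Real.sin (2 * π * (((i:ℤ) - j : ℤ) : ℝ) * x) := by
      funext x
      simp only [φ₁, ψ₂]
      push_cast
      rw [show 2 * π * ((i:ℝ) - j) * x = 2 * π * i * x - 2 * π * j * x by ring,
        show 2 * π * ((i:ℝ) + j) * x = 2 * π * i * x + 2 * π * j * x by ring,
        Real.sin_sub, Real.sin_add]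
      ring
    rw [ip, key, integral_add
      ((by fun_prop : Continuous fun x : ℝ => (0 + 2 * x + (-2) * x ^ 2) * Real.sin (2 * π * (((i:ℤ) + j : ℤ) : ℝ) * x)).intervalIntegrable _ _)
      ((by fun_prop : Continuous fun x : ℝ => (0 + 2 * x + (-2) * x ^ 2) * Real.sin (2 * π * (((i:ℤ) - j : ℤ) : ℝ) * x)).intervalIntegrable _ _),
      J_sin, J_sin, if_neg hs]
    by_cases h : (i:ℤ) - j = 0
    · rw [if_pos h]
      norm_num
    · rw [if_neg h]
      norm_num
  · -- φ₂ ψ₁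
    intro i j hi hj
    have hs : (i:ℤ) + j ≠ 0 := by omega
    have key : (fun x => φ₂ i x * ψ₁ j x) = fun x =>
        (2 + 0 * x + 0 * x ^ 2) * Real.sin (2 * π * (((i:ℤ) + j : ℤ) : ℝ) * x)
        - (2 + 0 * x + 0 * x ^ 2) * Real.sin (2 * π * (((i:ℤ) - j : ℤ) : ℝ) * x) := by
      funext x
      simp only [φ₂, ψ₁]
      push_cast
      rw [show 2 * π * ((i:ℝ) - j) * x = 2 * π * i * x - 2 * π * j * x by ring,
        show 2 * π * ((i:ℝ) + j) * x = 2 * π * i * x + 2 * π * j * x by ring,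
        Real.sin_sub, Real.sin_add]
      ring
    rw [ip, key, integral_sub
      ((by fun_prop : Continuous fun x : ℝ => (2 + 0 * x + 0 * x ^ 2) * Real.sin (2 * π * (((i:ℤ) + j : ℤ) : ℝ) * x)).intervalIntegrable _ _)
      ((by fun_prop : Continuous fun x : ℝ => (2 + 0 * x + 0 * x ^ 2) * Real.sin (2 * π * (((i:ℤ) - j : ℤ) : ℝ) * x)).intervalIntegrable _ _),
      J_sin, J_sin, if_neg hs]
    by_cases h : (i:ℤ) - j = 0
    · rw [if_pos h]
      norm_num
    · rw [if_neg h]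
      norm_num
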